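/- Let G be a finite group of order n and ψ : G×G → ⟨ζ_k⟩ a normalized cocycle. The matrix M_ψ = [ψ(g,h)]_{g,h∈G} satisfies M_ψ M_ψ* = n I_n (i.e., is a Butson Hadamard matrix BH(n,k)) if and only if ψ is orthogonal, i.e., for every g ≠ 1 in G, ∑_{h∈G} ψ(g,h) = 0. -/

import Mathlib

open Matrix

/-- Let `G` be a finite group of order `n` and `ψ : G×G → ⟨ζ_k⟩` a normalized
cocycle.  The cocyclic matrix `M_ψ = [ψ(g,h)]` satisfies `M_ψ M_ψ* = n·I`
(i.e. is a `BH(n,k)`) iff `ψ` is orthogonal: `∑_h ψ(g,h) = 0` for all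
`g ≠ 1`. -/
theorem cocyclic_butson_iff_orthogonal (G : Type*) [Group G] [Fintype G]
    [DecidableEq G] (k : ℕ) (hk : 0 < k) (ψ : G → G → ℂ)
    (hroot : ∀ g h : G, ψ g h ^ k = 1)
    (hnorm : ∀ g : G, ψ g 1 = 1 ∧ ψ 1 g = 1)
    (hcocycle : ∀ g h ℓ : G, ψ g h * ψ (g * h) ℓ = ψ g (h * ℓ) * ψ h ℓ) :
    (Matrix.of ψ) * (Matrix.of ψ).conjTranspose =
        (Fintype.card G : ℂ) • (1 : Matrix G G ℂ) ↔
      ∀ g : G, g ≠ 1 → ∑ h : G, ψ g h = 0 := by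
  have hne : ∀ g h : G, ψ g h ≠ 0 := by
    intro g h h0
    have := hroot g h
    rw [h0, zero_pow hk.ne'] at this
    exact zero_ne_one this
  have habs : ∀ g h : G, ‖ψ g h‖ = 1 := fun g h =>
    Complex.norm_eq_one_of_pow_eq_one (hroot g h) hk.ne'
  have hconj : ∀ g h : G, (starRingEnd ℂ) (ψ g h) = (ψ g h)⁻¹ := by
    intro g h
    rw [← Complex.inv_eq_conj (habs g h)]
  -- key computation of entries
  have hentry : ∀ a b : G,
      ((Matrix.of ψ) * (Matrix.of ψ).conjTranspose) a b =
        (ψ (a * b⁻¹) b)⁻¹ * ∑ h : G, ψ (a * b⁻¹) h := by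
    intro a b
    set c := a * b⁻¹ with hc
    have hcb : c * b = a := by rw [hc, inv_mul_cancel_right]
    rw [Matrix.mul_apply]
    have step : ∀ h : G, (Matrix.of ψ) a h * (Matrix.of ψ).conjTranspose h b
        = (ψ c b)⁻¹ * ψ c (b * h) := by
      intro h
      have key := hcocycle c b h
      rw [hcb] at key
      simp only [Matrix.of_apply, Matrix.conjTranspose_apply, Complex.star_def, hconj]
      have h1 := hne c b
      have h2 := hne b h
      rw [← div_eq_mul_inv, div_eq_iff h2]
      apply mul_left_cancel₀ h1
      rw [key, ← mul_assoc, ← mul_assoc, mul_inv_cancel₀ h1, one_mul]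
    rw [Finset.sum_congr rfl (fun h _ => step h), ← Finset.mul_sum]
    congr 1
    exact Fintype.sum_equiv (Equiv.mulLeft b) _ _ (fun h => rfl)
  constructor
  · intro hBH g hg
    have := congrFun (congrFun hBH g) 1
    rw [hentry g 1] at this
    simp only [inv_one, mul_one, (hnorm g).1, Matrix.smul_apply,
      Matrix.one_apply, if_neg hg, smul_zero, one_mul] at this
    exact this
  · intro horth
    ext a b
    rw [hentry a b]
    by_cases hab : a = b
    · subst hab
      have h1 : ∀ h : G, ψ 1 h = 1 := fun h => (hnorm h).2
      simp [h1, Matrix.one_apply, Matrix.smul_apply, Finset.card_univ]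
    · have hc : a * b⁻¹ ≠ 1 := fun h1 => hab (mul_inv_eq_one.mp h1)
      rw [horth _ hc, mul_zero]
      simp [Matrix.one_apply, Matrix.smul_apply, hab]
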